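/- arXiv:1710.05532 — 2 statements merged into one kernel-verified Lean document; each statement's English description precedes it below -/
import Mathlib

section
/- Let e ≥ 1 and let Γ ≤ SL₂(ℤ) be a congruence subgroup containing the three matrices [[1, e],[0, 1]], [[1, 0],[e, 1]], and [[1+e, −e],[e, 1−e]]. Then Γ contains the principal congruence subgroup Γ(e) = ker(SL₂(ℤ) → SL₂(ℤ/e)). -/
open CongruenceSubgroup

namespace Stmt15Aux

open Matrix

abbrev Mat2 := Matrix (Fin 2) (Fin 2) ℤ

/-- entrywise congruence of integer matrices -/
def ModM (n : ℤ) (A B : Mat2) : Prop := ∀ i j, n ∣ (A i j - B i j)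

lemma ModM.refl (n : ℤ) (A : Mat2) : ModM n A A := fun i j => by simp

lemma ModM.symm {n : ℤ} {A B : Mat2} (h : ModM n A B) : ModM n B A := by
  intro i j
  have h' := h i j
  have : B i j - A i j = -(A i j - B i j) := by ring
  rw [this]
  exact dvd_neg.mpr h'

lemma ModM.trans {n : ℤ} {A B C : Mat2} (h : ModM n A B) (h' : ModM n B C) :
    ModM n A C := by
  intro i j
  have h1 := h i j
  have h2 := h' i j
  have : A i j - C i j = (A i j - B i j) + (B i j - C i j) := by ring
  rw [this]
  exact dvd_add h1 h2

lemma ModM.mul {n : ℤ} {A B C D : Mat2} (h1 : ModM n A B) (h2 : ModM n C D) :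
    ModM n (A * C) (B * D) := by
  intro i j
  obtain ⟨p0, hp0⟩ := h1 i 0
  obtain ⟨p1, hp1⟩ := h1 i 1
  obtain ⟨q0, hq0⟩ := h2 0 j
  obtain ⟨q1, hq1⟩ := h2 1 j
  refine ⟨A i 0 * q0 + p0 * D 0 j + A i 1 * q1 + p1 * D 1 j, ?_⟩
  rw [Matrix.mul_apply, Matrix.mul_apply, Fin.sum_univ_two, Fin.sum_univ_two]
  linear_combination A i 0 * hq0 + D 0 j * hp0 + A i 1 * hq1 + D 1 j * hp1

lemma ModM.of_dvd {n m : ℤ} (hd : m ∣ n) {A B : Mat2} (h : ModM n A B) : ModM m A B :=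
  fun i j => dvd_trans hd (h i j)

/-- the three one-parameter families -/
def UE (e n : ℤ) : Matrix.SpecialLinearGroup (Fin 2) ℤ :=
  ⟨!![1, e * n; 0, 1], by simp [Matrix.det_fin_two_of]⟩

def LE (e n : ℤ) : Matrix.SpecialLinearGroup (Fin 2) ℤ :=
  ⟨!![1, 0; e * n, 1], by simp [Matrix.det_fin_two_of]⟩

def WE (e n : ℤ) : Matrix.SpecialLinearGroup (Fin 2) ℤ :=
  ⟨!![1 + e * n, -(e * n); e * n, 1 - e * n], by simp [Matrix.det_fin_two_of]; ring⟩

lemma SLext {A B : Matrix.SpecialLinearGroup (Fin 2) ℤ}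
    (h : (A : Mat2) = (B : Mat2)) : A = B := Subtype.ext h

lemma UE_coe (e n : ℤ) : (UE e n : Mat2) = !![1, e * n; 0, 1] := rfl
lemma LE_coe (e n : ℤ) : (LE e n : Mat2) = !![1, 0; e * n, 1] := rfl
lemma WE_coe (e n : ℤ) : (WE e n : Mat2) = !![1 + e * n, -(e * n); e * n, 1 - e * n] := rfl

lemma UE_mul (e x y : ℤ) : UE e x * UE e y = UE e (x + y) := by
  apply SLext
  rw [Matrix.SpecialLinearGroup.coe_mul]
  show (!![_,_;_,_] : Mat2) * !![_,_;_,_] = _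
  rw [Matrix.mul_fin_two]
  show _ = (!![_,_;_,_] : Mat2)
  ext i j
  fin_cases i <;> fin_cases j <;> simp [UE] <;> ring

lemma LE_mul (e x y : ℤ) : LE e x * LE e y = LE e (x + y) := by
  apply SLext
  rw [Matrix.SpecialLinearGroup.coe_mul]
  show (!![_,_;_,_] : Mat2) * !![_,_;_,_] = _
  rw [Matrix.mul_fin_two]
  show _ = (!![_,_;_,_] : Mat2)
  ext i j
  fin_cases i <;> fin_cases j <;> simp [LE] <;> ring

lemma WE_mul (e x y : ℤ) : WE e x * WE e y = WE e (x + y) := by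
  apply SLext
  rw [Matrix.SpecialLinearGroup.coe_mul]
  show (!![_,_;_,_] : Mat2) * !![_,_;_,_] = _
  rw [Matrix.mul_fin_two]
  show _ = (!![_,_;_,_] : Mat2)
  ext i j
  fin_cases i <;> fin_cases j <;> simp [WE] <;> ring

lemma UE_zero (e : ℤ) : UE e 0 = 1 := by apply SLext; simp [UE, Matrix.one_fin_two]
lemma LE_zero (e : ℤ) : LE e 0 = 1 := by apply SLext; simp [LE, Matrix.one_fin_two]
lemma WE_zero (e : ℤ) : WE e 0 = 1 := by apply SLext; simp [WE, Matrix.one_fin_two]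

lemma UE_inv (e x : ℤ) : (UE e x)⁻¹ = UE e (-x) := by
  rw [eq_comm, eq_inv_iff_mul_eq_one, UE_mul]
  simp [UE_zero]

lemma LE_inv (e x : ℤ) : (LE e x)⁻¹ = LE e (-x) := by
  rw [eq_comm, eq_inv_iff_mul_eq_one, LE_mul]
  simp [LE_zero]

lemma WE_inv (e x : ℤ) : (WE e x)⁻¹ = WE e (-x) := by
  rw [eq_comm, eq_inv_iff_mul_eq_one, WE_mul]
  simp [WE_zero]

/-- membership of a whole one-parameter family from membership of the generator -/
lemma family_mem {Γ : Subgroup (Matrix.SpecialLinearGroup (Fin 2) ℤ)}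
    (f : ℤ → Matrix.SpecialLinearGroup (Fin 2) ℤ)
    (hmul : ∀ x y, f x * f y = f (x + y)) (h1 : f 1 ∈ Γ) : ∀ n : ℤ, f n ∈ Γ := by
  have f0 : f 0 = 1 := by
    have h := hmul 0 0
    rw [show (0 : ℤ) + 0 = 0 by ring] at h
    have := mul_left_cancel (a := f 0) (b := f 0) (c := 1) (by rw [h, mul_one])
    exact this
  have hneg1 : f (-1) ∈ Γ := by
    have h : f (-1) * f 1 = 1 := by rw [hmul]; norm_num [f0]
    have : f (-1) = (f 1)⁻¹ := eq_inv_of_mul_eq_one_left h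
    rw [this]; exact inv_mem h1
  intro n
  induction n using Int.induction_on with
  | zero => rw [f0]; exact one_mem _
  | succ k ih => rw [← hmul]; exact mul_mem ih h1
  | pred k ih =>
      have : f (-(k : ℤ) - 1) = f (-k) * f (-1) := by rw [hmul]; ring_nf
      rw [this]; exact mul_mem ih hneg1

/-- PART A: graded descent. Any `γ ≡ 1 mod e^j` agrees modulo `e^(j+d)` with a word in the
three one-parameter families. -/
lemma descent (e : ℤ) (he : 1 ≤ e) {Γ : Subgroup (Matrix.SpecialLinearGroup (Fin 2) ℤ)}
    (hU : ∀ n : ℤ, UE e n ∈ Γ) (hL : ∀ n : ℤ, LE e n ∈ Γ) (hW : ∀ n : ℤ, WE e n ∈ Γ) :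
    ∀ (d j : ℕ), 1 ≤ j → ∀ γ : Matrix.SpecialLinearGroup (Fin 2) ℤ,
      ModM (e ^ j) (γ : Mat2) 1 → ∃ W ∈ Γ, ModM (e ^ (j + d)) (γ : Mat2) (W : Mat2) := by
  intro d
  induction d with
  | zero =>
      intro j hj γ h
      exact ⟨1, one_mem _, by simpa using h⟩
  | succ d ih =>
      intro j hj γ h
      obtain ⟨j', rfl⟩ : ∃ j', j = j' + 1 := ⟨j - 1, by omega⟩
      set E : ℤ := e ^ j' with hE
      have hEpow : e ^ (j' + 1) = e * E := by rw [pow_succ]; ring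
      have h00 := h 0 0; have h01 := h 0 1; have h10 := h 1 0; have h11 := h 1 1
      rw [show (1 : Mat2) 0 0 = 1 by simp] at h00
      rw [show (1 : Mat2) 0 1 = 0 by simp] at h01
      rw [show (1 : Mat2) 1 0 = 0 by simp] at h10
      rw [show (1 : Mat2) 1 1 = 1 by simp] at h11
      rw [hEpow] at h00 h01 h10 h11
      obtain ⟨y00, hy00⟩ := h00
      obtain ⟨y01, hy01⟩ := h01
      obtain ⟨y10, hy10⟩ := h10
      obtain ⟨y11, hy11⟩ := h11
      have hmat : (γ : Mat2) = !![1 + (e*E)*y00, (e*E)*y01; (e*E)*y10, 1 + (e*E)*y11] := by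
        rw [Matrix.eta_fin_two (γ : Mat2)]
        have e1 : (γ : Mat2) 0 0 = 1 + (e*E)*y00 := by linarith [hy00]
        have e2 : (γ : Mat2) 0 1 = (e*E)*y01 := by linarith [hy01]
        have e3 : (γ : Mat2) 1 0 = (e*E)*y10 := by linarith [hy10]
        have e4 : (γ : Mat2) 1 1 = 1 + (e*E)*y11 := by linarith [hy11]
        rw [e1, e2, e3, e4]
      have hd0 : Matrix.det (γ : Mat2) = 1 := γ.prop
      rw [hmat, Matrix.det_fin_two_of] at hd0
      have hEne : (e * E : ℤ) ≠ 0 := by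
        have : (0:ℤ) < e * E := by positivity
        exact this.ne'
      have ht : y00 + y11 + (e*E)*(y00*y11 - y01*y10) = 0 := by
        apply mul_left_cancel₀ hEne
        rw [mul_zero]
        linear_combination hd0
      set W₀ := UE e ((y01 + y00)*E) * LE e ((y10 - y00)*E) * WE e (y00*E) with hW₀def
      have hW₀ : W₀ ∈ Γ := mul_mem (mul_mem (hU _) (hL _)) (hW _)
      set γ' := W₀⁻¹ * γ with hγ'def
      have hγ'coe : (γ' : Mat2) =
          (WE e (-(y00*E)) : Mat2) * ((LE e (-((y10 - y00)*E)) : Mat2) *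
            ((UE e (-((y01 + y00)*E)) : Mat2) * (γ : Mat2))) := by
        rw [hγ'def, hW₀def, _root_.mul_inv_rev, _root_.mul_inv_rev, UE_inv, LE_inv, WE_inv]
        simp only [Matrix.SpecialLinearGroup.coe_mul, mul_assoc]
      have hstep : ModM (e ^ (j' + 2)) (γ' : Mat2) 1 := by
        have hEpow2 : e ^ (j' + 2) = e * (e * E) := by
          rw [hE, pow_succ, pow_succ]
          ring
        rw [hEpow2]
        intro i j
        rw [hγ'coe, hmat]
        rw [UE_coe, LE_coe, WE_coe]
        rw [Matrix.mul_fin_two, Matrix.mul_fin_two, Matrix.mul_fin_two]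
        fin_cases i <;> fin_cases j
        · refine ⟨(-1)*E*y01*y10 + (-1)*E*y00*y10 + e*E^2*y00*y01*y10 + e*E^2*y00^3 + e^2*E^3*y00*y01*y10^2 + e^2*E^3*y00^2*y10^2 + (-1)*e^2*E^3*y00^2*y01*y10 + (-1)*e^2*E^3*y00^3*y10, ?_⟩
          simp [Matrix.one_apply]
          linear_combination (0 : ℤ) * ht
        · refine ⟨(-1)*E*y01*y11 + E*y00^2 + e*E^2*y00*y01*y11 + e*E^2*y00^2*y11 + e*E^2*y00^2*y10 + (-1)*e*E^2*y00^3 + e^2*E^3*y00*y01*y10*y11 + e^2*E^3*y00^2*y10*y11 + (-1)*e^2*E^3*y00^2*y01*y11 + (-1)*e^2*E^3*y00^3*y11, ?_⟩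
          simp [Matrix.one_apply]
          linear_combination (0 : ℤ) * ht
        · refine ⟨(-1)*E*y00*y10 + E*y00^2 + e*E^2*y01*y10^2 + e*E^2*y00*y10^2 + (-1)*e*E^2*y00^2*y10 + e*E^2*y00^3 + e^2*E^3*y00*y01*y10^2 + e^2*E^3*y00^2*y10^2 + (-1)*e^2*E^3*y00^2*y01*y10 + (-1)*e^2*E^3*y00^3*y10, ?_⟩
          simp [Matrix.one_apply]
          linear_combination (0 : ℤ) * ht
        · refine ⟨E*y01*y10 + E*y00*y10 + e*E^2*y01*y10*y11 + e*E^2*y00*y10*y11 + e*E^2*y00^2*y10 + (-1)*e*E^2*y00^3 + e^2*E^3*y00*y01*y10*y11 + e^2*E^3*y00^2*y10*y11 + (-1)*e^2*E^3*y00^2*y01*y11 + (-1)*e^2*E^3*y00^3*y11, ?_⟩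
          simp [Matrix.one_apply]
          linear_combination (e*E) * ht
      obtain ⟨W', hW'Γ, hmod'⟩ := ih (j' + 2) (by omega) γ' hstep
      refine ⟨W₀ * W', mul_mem hW₀ hW'Γ, ?_⟩
      have hexp : j' + 1 + (d + 1) = j' + 2 + d := by omega
      rw [hexp]
      have hγeq : (γ : Mat2) = (W₀ : Mat2) * (γ' : Mat2) := by
        rw [hγ'def]
        rw [← Matrix.SpecialLinearGroup.coe_mul]
        congr 1
        group
        rfl
      rw [hγeq, Matrix.SpecialLinearGroup.coe_mul]
      exact ModM.mul (ModM.refl _ _) hmod'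

/-- explicit row reduction over a commutative ring, given the needed inverses -/
lemma rowred_matrix {R : Type*} [CommRing R] (a b c d t u : R)
    (hdet : a * d - b * c = 1) (hu : (c + t * a) * u = 1) :
    (!![a, b; c, d] : Matrix (Fin 2) (Fin 2) R) =
      !![1, 0; -t, 1] * !![1, -((1 - a) * u); 0, 1] *
        (!![1, 0; c + t * a, 1] * !![1, b + (1 - a) * u * (d + t * b); 0, 1]) := by
  rw [Matrix.mul_fin_two, Matrix.mul_fin_two, Matrix.mul_fin_two]
  ext i j
  fin_cases i <;> fin_cases j <;> simp
  · linear_combination (1 - a) * hu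
  · linear_combination (d*u + b*t*u - 2*a*d*u - 2*a*b*t*u + a^2*d*u + a^2*b*t*u) * hu +
      (-u + a*u) * hdet
  · linear_combination (-t + a*t) * hu
  · linear_combination (-d - d*t*u - b*t - b*t^2*u + a*d + 2*a*d*t*u + a*b*t + 2*a*b*t^2*u
      - a^2*d*t*u - a^2*b*t^2*u) * hu + (1 + t*u - a*t*u) * hdet

/-- a unimodular pair can be shifted to something coprime to any modulus -/
lemma exists_coprime_shift (a c : ℤ) (h : IsCoprime a c) (m : ℕ) (hm : 0 < m) :
    ∃ t : ℤ, IsCoprime (c + t * a) (m : ℤ) := by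
  classical
  set s : Finset ℕ := m.primeFactors.filter (fun p => ¬ (p : ℤ) ∣ c) with hs
  set T : ℕ := ∏ p ∈ s, p with hT
  refine ⟨(T : ℤ), ?_⟩
  rw [Int.isCoprime_iff_gcd_eq_one]
  by_contra hg
  obtain ⟨p, hp, hpd⟩ := Nat.exists_prime_and_dvd hg
  have hpdvd1 : (p : ℤ) ∣ c + (T : ℤ) * a := by
    calc (p : ℤ) ∣ (Int.gcd (c + (T : ℤ) * a) (m : ℤ) : ℤ) := Int.natCast_dvd_natCast.mpr hpd
    _ ∣ c + (T : ℤ) * a := Int.gcd_dvd_left _ _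
  have hpm : p ∣ m := by
    have : (p : ℤ) ∣ (m : ℤ) := by
      calc (p : ℤ) ∣ (Int.gcd (c + (T : ℤ) * a) (m : ℤ) : ℤ) := Int.natCast_dvd_natCast.mpr hpd
      _ ∣ (m : ℤ) := Int.gcd_dvd_right _ _
    exact_mod_cast this
  have hprime : Prime (p : ℤ) := Nat.prime_iff_prime_int.mp hp
  by_cases hpc : (p : ℤ) ∣ c
  · have hpa : ¬ (p : ℤ) ∣ a := by
      intro hpa
      have := h.isUnit_of_dvd' hpa hpc
      rw [Int.isUnit_iff] at this
      have h2 := hp.two_le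
      rcases this with h' | h' <;> omega
    have hpT : ¬ (p : ℤ) ∣ (T : ℤ) := by
      rw [Int.natCast_dvd_natCast]
      intro hdvd
      have hcop : Nat.Coprime p T := by
        apply Nat.Coprime.prod_right
        intro q hq
        rw [hs, Finset.mem_filter] at hq
        have hq' : q.Prime := Nat.prime_of_mem_primeFactors hq.1
        have hne : p ≠ q := by
          intro heq
          exact hq.2 (heq ▸ hpc)
        exact (Nat.coprime_primes hp hq').mpr hne
      have h1 : p ∣ Nat.gcd p T := Nat.dvd_gcd dvd_rfl hdvd
      rw [Nat.Coprime] at hcop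
      rw [hcop] at h1
      have h2 := Nat.dvd_one.mp h1
      have := hp.two_le
      omega
    have hpTa : (p : ℤ) ∣ (T : ℤ) * a := by
      have : (T : ℤ) * a = (c + (T : ℤ) * a) - c := by ring
      rw [this]
      exact dvd_sub hpdvd1 hpc
    rcases hprime.dvd_mul.mp hpTa with h' | h'
    · exact hpT h'
    · exact hpa h'
  · have hpfil : p ∈ s := by
      rw [hs, Finset.mem_filter]
      exact ⟨Nat.mem_primeFactors.mpr ⟨hp, hpm, hm.ne'⟩, hpc⟩
    have hpT : (p : ℤ) ∣ (T : ℤ) := Int.natCast_dvd_natCast.mpr (Finset.dvd_prod_of_mem _ hpfil)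
    have : (p : ℤ) ∣ c := by
      have hc : c = (c + (T : ℤ) * a) - (T : ℤ) * a := by ring
      rw [hc]
      exact dvd_sub hpdvd1 (hpT.mul_right a)
    exact hpc this

lemma modM_of_map (m : ℕ) {A B : Mat2}
    (h : A.map (Int.cast : ℤ → ZMod m) = B.map (Int.cast : ℤ → ZMod m)) :
    ModM (m : ℤ) A B := by
  intro i j
  have h' : (A i j : ZMod m) = (B i j : ZMod m) := by
    have := congrFun (congrFun h i) j
    simpa [Matrix.map_apply] using this
  have : ((A i j - B i j : ℤ) : ZMod m) = 0 := by push_cast; rw [h']; ring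
  exact (ZMod.intCast_zmod_eq_zero_iff_dvd _ m).mp this

/-- PART B: modulo `m` coprime to `e`, every `SL₂(ℤ)` matrix agrees with a word in the
elementary families. -/
lemma rowred (e : ℤ) (m : ℕ) (hm : 0 < m) (hcop : IsCoprime e (m : ℤ))
    (β : Matrix.SpecialLinearGroup (Fin 2) ℤ) :
    ∃ y₁ x₁ y₂ x₂ : ℤ, ModM (m : ℤ) (β : Mat2)
      ((LE e y₁ * UE e x₁ * (LE e y₂ * UE e x₂) : Matrix.SpecialLinearGroup (Fin 2) ℤ) : Mat2) := by
  set a := (β : Mat2) 0 0 with ha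
  set b := (β : Mat2) 0 1 with hb
  set c := (β : Mat2) 1 0 with hc
  set d := (β : Mat2) 1 1 with hd'
  have hdet : a * d - b * c = 1 := by
    have hdd := β.prop
    rw [Matrix.det_fin_two] at hdd
    exact hdd
  have hIc : IsCoprime a c := ⟨d, -b, by linear_combination hdet⟩
  obtain ⟨t, hct⟩ := exists_coprime_shift a c hIc m hm
  obtain ⟨u, v, huv⟩ := hct
  obtain ⟨u₂, v₂, h2⟩ := hcop
  refine ⟨-(t * u₂), -((1 - a) * u * u₂), (c + t * a) * u₂, (b + (1 - a) * u * (d + t * b)) * u₂, ?_⟩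
  apply modM_of_map
  set f := Int.castRingHom (ZMod m) with hf
  have hcast : (Int.cast : ℤ → ZMod m) = ⇑f := rfl
  rw [hcast]
  set aR : ZMod m := (a : ZMod m) with haR
  set bR : ZMod m := (b : ZMod m) with hbR
  set cR : ZMod m := (c : ZMod m) with hcR
  set dR : ZMod m := (d : ZMod m) with hdR
  set tR : ZMod m := (t : ZMod m) with htR
  set uR : ZMod m := (u : ZMod m) with huR'
  have huR : (cR + tR * aR) * uR = 1 := by
    have h := congrArg (fun x : ℤ => (x : ZMod m)) huv
    push_cast at h
    rw [ZMod.natCast_self] at h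
    rw [haR, hcR, htR, huR']
    linear_combination h
  have heR : ((e : ZMod m)) * ((u₂ : ℤ) : ZMod m) = 1 := by
    have h := congrArg (fun x : ℤ => (x : ZMod m)) h2
    push_cast at h
    rw [ZMod.natCast_self] at h
    linear_combination h
  have hdetR : aR * dR - bR * cR = 1 := by
    have h := congrArg (fun x : ℤ => (x : ZMod m)) hdet
    push_cast at h
    rw [haR, hbR, hcR, hdR]
    linear_combination h
  have hLHS : ((β : Mat2)).map ⇑f = !![aR, bR; cR, dR] := by
    rw [Matrix.eta_fin_two (β : Mat2), ← ha, ← hb, ← hc, ← hd']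
    ext i j
    fin_cases i <;> fin_cases j <;>
      simp [Matrix.map_apply, hf, haR, hbR, hcR, hdR]
  have hF1 : ((LE e (-(t * u₂)) : Mat2)).map ⇑f = !![1, 0; -tR, 1] := by
    rw [LE_coe]
    ext i j
    fin_cases i <;> fin_cases j <;> simp [Matrix.map_apply, hf, htR] <;> push_cast <;>
      linear_combination ((t : ZMod m)) * heR
  have hF2 : ((UE e (-((1 - a) * u * u₂)) : Mat2)).map ⇑f = !![1, -((1 - aR) * uR); 0, 1] := by
    rw [UE_coe]
    ext i j
    fin_cases i <;> fin_cases j <;> simp [Matrix.map_apply, hf, haR, huR'] <;> push_cast <;>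
      linear_combination (((1 - (a : ZMod m)) * (u : ZMod m))) * heR
  have hF3 : ((LE e ((c + t * a) * u₂) : Mat2)).map ⇑f = !![1, 0; cR + tR * aR, 1] := by
    rw [LE_coe]
    ext i j
    fin_cases i <;> fin_cases j <;> simp [Matrix.map_apply, hf, haR, hcR, htR] <;> push_cast <;>
      linear_combination ((c : ZMod m) + (t : ZMod m) * (a : ZMod m)) * heR
  have hF4 : ((UE e ((b + (1 - a) * u * (d + t * b)) * u₂) : Mat2)).map ⇑f =
      !![1, bR + (1 - aR) * uR * (dR + tR * bR); 0, 1] := by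
    rw [UE_coe]
    ext i j
    fin_cases i <;> fin_cases j <;>
      simp [Matrix.map_apply, hf, haR, hbR, hcR, hdR, htR, huR'] <;> push_cast <;>
      linear_combination ((b : ZMod m) + (1 - (a : ZMod m)) * (u : ZMod m) *
        ((d : ZMod m) + (t : ZMod m) * (b : ZMod m))) * heR
  rw [hLHS]
  simp only [Matrix.SpecialLinearGroup.coe_mul, Matrix.map_mul, hF1, hF2, hF3, hF4]
  exact rowred_matrix aR bR cR dR tR uR hdetR huR

lemma LE_modM (e : ℤ) {k y y' : ℤ} (h : k ∣ (y - y')) :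
    ModM k ((LE e y : Matrix.SpecialLinearGroup (Fin 2) ℤ) : Mat2) ((LE e y' : Matrix.SpecialLinearGroup (Fin 2) ℤ) : Mat2) := by
  intro i j
  rw [LE_coe, LE_coe]
  fin_cases i <;> fin_cases j <;> simp
  have : e * y - e * y' = e * (y - y') := by ring
  rw [this]
  exact h.mul_left e

lemma UE_modM (e : ℤ) {k x x' : ℤ} (h : k ∣ (x - x')) :
    ModM k ((UE e x : Matrix.SpecialLinearGroup (Fin 2) ℤ) : Mat2) ((UE e x' : Matrix.SpecialLinearGroup (Fin 2) ℤ) : Mat2) := by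
  intro i j
  rw [UE_coe, UE_coe]
  fin_cases i <;> fin_cases j <;> simp
  have : e * x - e * x' = e * (x - x') := by ring
  rw [this]
  exact h.mul_left e

end Stmt15Aux

open Stmt15Aux

/-- Let `e ≥ 1` and `Γ ≤ SL₂(ℤ)` a congruence subgroup containing the three matrices
`[[1, e],[0, 1]]`, `[[1, 0],[e, 1]]`, `[[1+e, −e],[e, 1−e]]` (i.e. `1 + eXᵢ` for
`X₁ = [[0,1],[0,0]]`, `X₂ = [[0,0],[1,0]]`, `X₃ = [[1,−1],[1,−1]]`).
Then `Γ` contains the principal congruence subgroup `Γ(e)`. -/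
theorem stmt_15 (e : ℕ) (he : 1 ≤ e)
    (Γ : Subgroup (Matrix.SpecialLinearGroup (Fin 2) ℤ))
    (hΓ : IsCongruenceSubgroup Γ)
    (h₁ : ∀ g : Matrix.SpecialLinearGroup (Fin 2) ℤ,
      (g : Matrix (Fin 2) (Fin 2) ℤ) = !![1, (e : ℤ); 0, 1] → g ∈ Γ)
    (h₂ : ∀ g : Matrix.SpecialLinearGroup (Fin 2) ℤ,
      (g : Matrix (Fin 2) (Fin 2) ℤ) = !![1, 0; (e : ℤ), 1] → g ∈ Γ)
    (h₃ : ∀ g : Matrix.SpecialLinearGroup (Fin 2) ℤ,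
      (g : Matrix (Fin 2) (Fin 2) ℤ) = !![1 + (e : ℤ), -(e : ℤ); (e : ℤ), 1 - (e : ℤ)] →
        g ∈ Γ) :
    Gamma e ≤ Γ := by
  obtain ⟨N, hN⟩ := hΓ
  intro γ hγ
  set eZ : ℤ := (e : ℤ) with heZ
  have heZ1 : 1 ≤ eZ := by rw [heZ]; exact_mod_cast he
  -- the three one-parameter families lie in Γ
  have hU : ∀ n : ℤ, UE eZ n ∈ Γ := by
    apply family_mem (UE eZ) (UE_mul eZ)
    apply h₁
    rw [UE_coe]
    norm_num
  have hL : ∀ n : ℤ, LE eZ n ∈ Γ := by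
    apply family_mem (LE eZ) (LE_mul eZ)
    apply h₂
    rw [LE_coe]
    norm_num
  have hWm : ∀ n : ℤ, WE eZ n ∈ Γ := by
    apply family_mem (WE eZ) (WE_mul eZ)
    apply h₃
    rw [WE_coe]
    norm_num
  set M : ℕ := e * N with hM
  have hM0 : 0 < M := Nat.mul_pos (by omega) (Nat.pos_of_ne_zero hN.1)
  set M₁ : ℕ := Nat.gcd M (e ^ M) with hM₁
  set M₂ : ℕ := M / M₁ with hM₂
  have hM₁pos : 0 < M₁ := Nat.gcd_pos_of_pos_left _ hM0
  have hM₁dvd : M₁ ∣ M := Nat.gcd_dvd_left _ _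
  have hMM : M₁ * M₂ = M := Nat.mul_div_cancel' hM₁dvd
  have hM₂pos : 0 < M₂ := Nat.div_pos (Nat.le_of_dvd hM0 hM₁dvd) hM₁pos
  have hM₁e : M₁ ∣ e ^ M := Nat.gcd_dvd_right _ _
  have hcop2 : Nat.Coprime e M₂ := by
    rw [Nat.Coprime]
    by_contra hcon
    obtain ⟨p, hp, hpd⟩ := Nat.exists_prime_and_dvd hcon
    have hpe : p ∣ e := hpd.trans (Nat.gcd_dvd_left _ _)
    have hpM₂ : p ∣ M₂ := hpd.trans (Nat.gcd_dvd_right _ _)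
    have h1 : p * M₁ ∣ M := by
      rw [← hMM, mul_comm p M₁]
      exact mul_dvd_mul_left M₁ hpM₂
    set v : ℕ := M₁.factorization p with hv
    have hordc : p ^ v * (M₁ / p ^ v) = M₁ := Nat.ordProj_mul_ordCompl_eq_self M₁ p
    have hpord : ¬ p ∣ (M₁ / p ^ v) := Nat.not_dvd_ordCompl hp hM₁pos.ne'
    have hvM : v < M := by
      have h3 : p ^ v ∣ M := dvd_trans (Nat.ordProj_dvd M₁ p) hM₁dvd
      have h4 : p ^ v ≤ M := Nat.le_of_dvd hM0 h3
      have h5 : v < p ^ v := Nat.lt_pow_self hp.one_lt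
      omega
    have h6 : p ^ (v + 1) ∣ e ^ M := by
      calc p ^ (v + 1) ∣ p ^ M := pow_dvd_pow p (by omega)
      _ ∣ e ^ M := pow_dvd_pow_of_dvd hpe M
    have h7 : (M₁ / p ^ v) ∣ e ^ M := dvd_trans (Nat.ordCompl_dvd M₁ p) hM₁e
    have h8 : Nat.Coprime (p ^ (v + 1)) (M₁ / p ^ v) :=
      Nat.Coprime.pow_left _ ((Nat.Prime.coprime_iff_not_dvd hp).mpr hpord)
    have h9 : p * M₁ ∣ e ^ M := by
      have heq : p * M₁ = p ^ (v + 1) * (M₁ / p ^ v) := by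
        calc p * M₁ = p * (p ^ v * (M₁ / p ^ v)) := by rw [hordc]
        _ = p ^ (v + 1) * (M₁ / p ^ v) := by rw [pow_succ]; ring
      rw [heq]
      exact Nat.Coprime.mul_dvd_of_dvd_of_dvd h8 h6 h7
    have h10 : p * M₁ ∣ M₁ := by
      rw [hM₁]
      exact Nat.dvd_gcd h1 h9
    have h11 := Nat.le_of_dvd hM₁pos h10
    nlinarith [hp.two_le, hM₁pos]
  have hcop12 : Nat.Coprime M₁ M₂ := by
    rw [Nat.Coprime]
    by_contra hcon
    obtain ⟨p, hp, hpd⟩ := Nat.exists_prime_and_dvd hcon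
    have hpM₁ : p ∣ M₁ := hpd.trans (Nat.gcd_dvd_left _ _)
    have hpM₂ : p ∣ M₂ := hpd.trans (Nat.gcd_dvd_right _ _)
    have hpe : p ∣ e := hp.dvd_of_dvd_pow (hpM₁.trans hM₁e)
    have h1 : p ∣ Nat.gcd e M₂ := Nat.dvd_gcd hpe hpM₂
    rw [hcop2] at h1
    have := Nat.dvd_one.mp h1
    have := hp.two_le
    omega
  -- γ is congruent to 1 modulo e
  have hγmem := Gamma_mem.mp hγ
  have hmod_e : ModM eZ (γ : Mat2) 1 := by
    have hmat1 : (γ : Mat2) = !![(γ : Mat2) 0 0, (γ : Mat2) 0 1; (γ : Mat2) 1 0, (γ : Mat2) 1 1] :=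
      Matrix.eta_fin_two _
    intro i j
    rw [hmat1, Matrix.one_fin_two]
    fin_cases i <;> fin_cases j <;> simp only [Matrix.of_apply, Matrix.cons_val',
      Matrix.cons_val_zero, Matrix.cons_val_one, Matrix.head_cons, Matrix.empty_val',
      Matrix.cons_val_fin_one, Matrix.head_fin_const, Fin.zero_eta, Fin.mk_one, Fin.isValue]
    · rw [← ZMod.intCast_zmod_eq_zero_iff_dvd]
      push_cast
      rw [hγmem.1]
      ring
    · rw [← ZMod.intCast_zmod_eq_zero_iff_dvd]
      push_cast
      rw [hγmem.2.1]
      ring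
    · rw [← ZMod.intCast_zmod_eq_zero_iff_dvd]
      push_cast
      rw [hγmem.2.2.1]
      ring
    · rw [← ZMod.intCast_zmod_eq_zero_iff_dvd]
      push_cast
      rw [hγmem.2.2.2]
      ring
  -- PART A: descend to congruence modulo M₁
  obtain ⟨W, hWΓ, hmodW⟩ := descent eZ heZ1 hU hL hWm M 1 le_rfl γ
    (by rw [pow_one]; exact hmod_e)
  have hM₁dvdpow : (M₁ : ℤ) ∣ eZ ^ (1 + M) := by
    have h : (M₁ : ℕ) ∣ e ^ (1 + M) := hM₁e.trans (pow_dvd_pow e (by omega))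
    have := Int.natCast_dvd_natCast.mpr h
    push_cast at this
    exact this
  have hmodM₁ : ModM (M₁ : ℤ) (γ : Mat2) (W : Mat2) := hmodW.of_dvd hM₁dvdpow
  set B := W⁻¹ * γ with hB
  have hB1 : ModM (M₁ : ℤ) (B : Mat2) 1 := by
    have h2 := ModM.mul (ModM.refl (M₁ : ℤ) ((W⁻¹ : Matrix.SpecialLinearGroup (Fin 2) ℤ) : Mat2)) hmodM₁
    rw [hB, Matrix.SpecialLinearGroup.coe_mul]
    have h3 : ((W⁻¹ : Matrix.SpecialLinearGroup (Fin 2) ℤ) : Mat2) * (W : Mat2) = 1 := by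
      rw [← Matrix.SpecialLinearGroup.coe_mul, inv_mul_cancel, Matrix.SpecialLinearGroup.coe_one]
    rw [h3] at h2
    exact h2
  -- PART B modulo M₂
  have hcopZ : IsCoprime eZ ((M₂ : ℕ) : ℤ) := by
    rw [Int.isCoprime_iff_gcd_eq_one]
    exact_mod_cast hcop2
  obtain ⟨y₁, x₁, y₂, x₂, hmod2⟩ := rowred eZ M₂ hM₂pos hcopZ B
  -- CRT lift of the parameters
  have hic12 : IsCoprime ((M₁ : ℕ) : ℤ) ((M₂ : ℕ) : ℤ) := by
    rw [Int.isCoprime_iff_gcd_eq_one]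
    exact_mod_cast hcop12
  obtain ⟨uu, vv, huv12⟩ := id hic12
  have lift : ∀ r : ℤ, ∃ r', ((M₁ : ℕ) : ℤ) ∣ r' ∧ ((M₂ : ℕ) : ℤ) ∣ (r' - r) := by
    intro r
    exact ⟨r * uu * M₁, ⟨r * uu, by ring⟩, ⟨-(r * vv), by linear_combination r * huv12⟩⟩
  obtain ⟨y₁', hy₁'1, hy₁'2⟩ := lift y₁
  obtain ⟨x₁', hx₁'1, hx₁'2⟩ := lift x₁
  obtain ⟨y₂', hy₂'1, hy₂'2⟩ := lift y₂
  obtain ⟨x₂', hx₂'1, hx₂'2⟩ := lift x₂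
  set P := LE eZ y₁' * UE eZ x₁' * (LE eZ y₂' * UE eZ x₂') with hP
  have hPΓ : P ∈ Γ := mul_mem (mul_mem (hL _) (hU _)) (mul_mem (hL _) (hU _))
  have hP2 : ModM ((M₂ : ℕ) : ℤ) (B : Mat2) (P : Mat2) := by
    refine hmod2.trans ?_
    rw [hP]
    simp only [Matrix.SpecialLinearGroup.coe_mul]
    exact ModM.mul
      (ModM.mul (LE_modM eZ (by rw [show y₁ - y₁' = -(y₁' - y₁) by ring]; exact dvd_neg.mpr hy₁'2)) (UE_modM eZ (by rw [show x₁ - x₁' = -(x₁' - x₁) by ring]; exact dvd_neg.mpr hx₁'2)))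
      (ModM.mul (LE_modM eZ (by rw [show y₂ - y₂' = -(y₂' - y₂) by ring]; exact dvd_neg.mpr hy₂'2)) (UE_modM eZ (by rw [show x₂ - x₂' = -(x₂' - x₂) by ring]; exact dvd_neg.mpr hx₂'2)))
  have hP1 : ModM ((M₁ : ℕ) : ℤ) (P : Mat2) 1 := by
    have hLE1 : ModM ((M₁ : ℕ) : ℤ) ((LE eZ y₁' : Matrix.SpecialLinearGroup (Fin 2) ℤ) : Mat2) 1 := by
      have h := LE_modM eZ (k := ((M₁ : ℕ) : ℤ)) (y := y₁') (y' := 0) (by simpa using hy₁'1)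
      rwa [LE_zero, Matrix.SpecialLinearGroup.coe_one] at h
    have hUE1 : ModM ((M₁ : ℕ) : ℤ) ((UE eZ x₁' : Matrix.SpecialLinearGroup (Fin 2) ℤ) : Mat2) 1 := by
      have h := UE_modM eZ (k := ((M₁ : ℕ) : ℤ)) (x := x₁') (x' := 0) (by simpa using hx₁'1)
      rwa [UE_zero, Matrix.SpecialLinearGroup.coe_one] at h
    have hLE2 : ModM ((M₁ : ℕ) : ℤ) ((LE eZ y₂' : Matrix.SpecialLinearGroup (Fin 2) ℤ) : Mat2) 1 := by
      have h := LE_modM eZ (k := ((M₁ : ℕ) : ℤ)) (y := y₂') (y' := 0) (by simpa using hy₂'1)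
      rwa [LE_zero, Matrix.SpecialLinearGroup.coe_one] at h
    have hUE2 : ModM ((M₁ : ℕ) : ℤ) ((UE eZ x₂' : Matrix.SpecialLinearGroup (Fin 2) ℤ) : Mat2) 1 := by
      have h := UE_modM eZ (k := ((M₁ : ℕ) : ℤ)) (x := x₂') (x' := 0) (by simpa using hx₂'1)
      rwa [UE_zero, Matrix.SpecialLinearGroup.coe_one] at h
    have h := ModM.mul (ModM.mul hLE1 hUE1) (ModM.mul hLE2 hUE2)
    rw [hP]
    simp only [Matrix.SpecialLinearGroup.coe_mul]
    simpa using h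
  have hBP1 : ModM ((M₁ : ℕ) : ℤ) (B : Mat2) (P : Mat2) := hB1.trans hP1.symm
  have hBPM : ModM ((M : ℕ) : ℤ) (B : Mat2) (P : Mat2) := by
    intro i j
    have h1 := hBP1 i j
    have h2 := hP2 i j
    have hMcast : ((M : ℕ) : ℤ) = ((M₁ : ℕ) : ℤ) * ((M₂ : ℕ) : ℤ) := by exact_mod_cast hMM.symm
    rw [hMcast]
    exact hic12.mul_dvd h1 h2
  set δ := P⁻¹ * B with hδ
  have hδmod : ModM (((N : ℕ)) : ℤ) (δ : Mat2) 1 := by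
    have h2 := ModM.mul (ModM.refl ((M : ℕ) : ℤ) ((P⁻¹ : Matrix.SpecialLinearGroup (Fin 2) ℤ) : Mat2)) hBPM
    have h3 : ((P⁻¹ : Matrix.SpecialLinearGroup (Fin 2) ℤ) : Mat2) * (P : Mat2) = 1 := by
      rw [← Matrix.SpecialLinearGroup.coe_mul, inv_mul_cancel, Matrix.SpecialLinearGroup.coe_one]
    rw [h3] at h2
    have h4 : ModM ((M : ℕ) : ℤ) (δ : Mat2) 1 := by
      rw [hδ, Matrix.SpecialLinearGroup.coe_mul]
      exact h2
    refine h4.of_dvd ?_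
    have : (N : ℕ) ∣ M := ⟨e, by rw [hM]; ring⟩
    exact_mod_cast this
  have hδΓN : δ ∈ Gamma (N : ℕ) := by
    rw [Gamma_mem]
    have k00 := hδmod 0 0
    have k01 := hδmod 0 1
    have k10 := hδmod 1 0
    have k11 := hδmod 1 1
    rw [show (1 : Mat2) 0 0 = 1 by simp] at k00
    rw [show (1 : Mat2) 0 1 = 0 by simp] at k01
    rw [show (1 : Mat2) 1 0 = 0 by simp] at k10
    rw [show (1 : Mat2) 1 1 = 1 by simp] at k11
    refine ⟨?_, ?_, ?_, ?_⟩
    · have h := (ZMod.intCast_zmod_eq_zero_iff_dvd _ (N : ℕ)).mpr k00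
      push_cast at h
      exact sub_eq_zero.mp h
    · have h := (ZMod.intCast_zmod_eq_zero_iff_dvd _ (N : ℕ)).mpr k01
      push_cast at h
      simpa using h
    · have h := (ZMod.intCast_zmod_eq_zero_iff_dvd _ (N : ℕ)).mpr k10
      push_cast at h
      simpa using h
    · have h := (ZMod.intCast_zmod_eq_zero_iff_dvd _ (N : ℕ)).mpr k11
      push_cast at h
      exact sub_eq_zero.mp h
  have hfin : γ = W * (P * δ) := by
    rw [hδ, hB]
    group
  rw [hfin]
  exact mul_mem hWΓ (mul_mem hPΓ (hN.2 hδΓN))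
end

section
/- Let M̂ be the free profinite metabelian group of rank 2 with generators x₁, x₂, abelianization Â with images a₁, a₂, and let R = Ẑ[[Â]] be the completed group algebra acting on M̂'. For r = (r₁, r₂) ∈ R², let γ_r be the IA-endomorphism of M̂ with γ_r(xᵢ) = [x₁,x₂]^{rᵢ} xᵢ. Then γ_r acts on M̂' (a free R-module of rank 1 generated by [x₁,x₂]) by multiplication by det(γ_r) = 1 + r₁(1 − a₂) + r₂(a₁ − 1); i.e., γ_r([x₁,x₂]) = [x₁,x₂]^{1 + r₁(1−a₂) + r₂(a₁−1)}. -/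
open scoped commutatorElement

section Aux

variable {G : Type*} [Group G]

lemma aux_comm_mul_left (x y z : G) : ⁅x * y, z⁆ = x * ⁅y, z⁆ * x⁻¹ * ⁅x, z⁆ := by
  simp only [commutatorElement_def]; group

lemma aux_comm_inv_left (x y : G) : ⁅x⁻¹, y⁆ = x⁻¹ * ⁅x, y⁆⁻¹ * x := by
  simp only [commutatorElement_def]; group

lemma aux_comm_mul_right (x y z : G) : ⁅x, y * z⁆ = ⁅x, y⁆ * (y * ⁅x, z⁆ * y⁻¹) := by
  simp only [commutatorElement_def]; group

lemma aux_comm_inv_right (x y : G) : ⁅x, y⁻¹⁆ = y⁻¹ * ⁅x, y⁆⁻¹ * y := by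
  simp only [commutatorElement_def]; group

/-- The data carried along the induction: `u` is the unit by which `g` acts on the
`E`-image by conjugation, `p, q` are Fox-derivative-like coefficients. -/
def IsGood {R : Type*} [CommRing R] (E : R → G) (γ : G →* G)
    (a₁ a₂ : Rˣ) (r₁ r₂ : R) (g : G) (u : Rˣ) (p q : R) : Prop :=
  (∀ s : R, g * E s * g⁻¹ = E ((u : R) * s)) ∧
    γ g = E (r₁ * p + r₂ * q) * g ∧
    ((u : R) - 1 = p * ((a₁ : R) - 1) + q * ((a₂ : R) - 1))

end Aux

/-- Abstract setting for the rank-2 free profinite metabelian group `M̂` (a group `G`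
generated by `x₁, x₂`) whose derived subgroup `M̂' = ⁅G,G⁆` is a free rank-1 module
over `R = Ẑ[[Â]]` with basis `c = [x₁,x₂]`, the module action `r ↦ c^r` (encoded by
the map `E : R → G`, so `E r = [x₁,x₂]^r`) extending the conjugation action of the
abelianization (with `a₁, a₂ ∈ Rˣ` the images of `x₁, x₂`).

If `γ` is the IA-endomorphism `γ_r` with `γ(xᵢ) = [x₁,x₂]^{rᵢ} xᵢ`, then `γ` acts on
`M̂'` by multiplication by `det(γ_r) = 1 + r₁(1 − a₂) + r₂(a₁ − 1)`:
`γ([x₁,x₂]^s) = [x₁,x₂]^{det(γ_r)·s}` for all `s`; in particular (at `s = 1`)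
`γ([x₁,x₂]) = [x₁,x₂]^{1 + r₁(1−a₂) + r₂(a₁−1)}`. -/
theorem stmt_17 {G : Type*} [Group G] {R : Type*} [CommRing R]
    (x₁ x₂ : G) (hgen : Subgroup.closure ({x₁, x₂} : Set G) = ⊤)
    (a₁ a₂ : Rˣ) (E : R → G)
    (hE_inj : Function.Injective E)
    (hE_range : Set.range E = (commutator G : Set G))
    (hE_add : ∀ r s : R, E (r + s) = E r * E s)
    (hE_one : E 1 = ⁅x₁, x₂⁆)
    (hconj₁ : ∀ r : R, x₁ * E r * x₁⁻¹ = E ((a₁ : R) * r))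
    (hconj₂ : ∀ r : R, x₂ * E r * x₂⁻¹ = E ((a₂ : R) * r))
    (r₁ r₂ : R) (γ : G →* G)
    (hIA : ∀ g : G, γ g * g⁻¹ ∈ commutator G)
    (hγ₁ : γ x₁ = E r₁ * x₁) (hγ₂ : γ x₂ = E r₂ * x₂) :
    ∀ s : R, γ (E s) = E ((1 + r₁ * (1 - (a₂ : R)) + r₂ * ((a₁ : R) - 1)) * s) := by
  set d : R := 1 + r₁ * (1 - (a₂ : R)) + r₂ * ((a₁ : R) - 1) with hd
  -- basic facts about E
  have hE0 : E 0 = 1 := by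
    have h := hE_add 0 0
    rw [add_zero] at h
    exact left_eq_mul.mp h
  have hEneg : ∀ s : R, E (-s) = (E s)⁻¹ := by
    intro s
    refine eq_inv_of_mul_eq_one_left ?_
    rw [← hE_add, neg_add_cancel, hE0]
  -- sandwich by inverse
  have hsand_inv : ∀ (h : G) (v : Rˣ), (∀ s : R, h * E s * h⁻¹ = E ((v : R) * s)) →
      ∀ s : R, h⁻¹ * E s * h = E (((v⁻¹ : Rˣ) : R) * s) := by
    intro h v hv s
    have h2 : h * E (((v⁻¹ : Rˣ) : R) * s) * h⁻¹ = E s := by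
      rw [hv]
      congr 1
      rw [← mul_assoc, Units.mul_inv, one_mul]
    rw [← h2]; group
  -- Good is closed under multiplication
  have hGood_mul : ∀ (g₁ g₂ : G) (u₁ u₂ : Rˣ) (p₁ q₁ p₂ q₂ : R),
      IsGood E γ a₁ a₂ r₁ r₂ g₁ u₁ p₁ q₁ → IsGood E γ a₁ a₂ r₁ r₂ g₂ u₂ p₂ q₂ →
      IsGood E γ a₁ a₂ r₁ r₂ (g₁ * g₂) (u₁ * u₂) (p₁ + (u₁ : R) * p₂) (q₁ + (u₁ : R) * q₂) := by
    intro g₁ g₂ u₁ u₂ p₁ q₁ p₂ q₂ ⟨hc₁, hγg₁, hr₁⟩ ⟨hc₂, hγg₂, hr₂⟩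
    refine ⟨?_, ?_, ?_⟩
    · intro s
      have step : (g₁ * g₂) * E s * (g₁ * g₂)⁻¹ = g₁ * (g₂ * E s * g₂⁻¹) * g₁⁻¹ := by group
      rw [step, hc₂, hc₁]
      congr 1
      push_cast
      ring
    · have step : γ (g₁ * g₂) = γ g₁ * γ g₂ := map_mul γ g₁ g₂
      rw [step, hγg₁, hγg₂]
      have step2 : E (r₁ * p₁ + r₂ * q₁) * g₁ * (E (r₁ * p₂ + r₂ * q₂) * g₂)
          = E (r₁ * p₁ + r₂ * q₁) * (g₁ * E (r₁ * p₂ + r₂ * q₂) * g₁⁻¹) * (g₁ * g₂) := by group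
      rw [step2, hc₁, ← hE_add]
      congr 2
      ring
    · push_cast
      linear_combination hr₁ + (u₁ : R) * hr₂
  -- Good is closed under inverse
  have hGood_inv : ∀ (g : G) (u : Rˣ) (p q : R),
      IsGood E γ a₁ a₂ r₁ r₂ g u p q →
      IsGood E γ a₁ a₂ r₁ r₂ g⁻¹ u⁻¹ (-((u⁻¹ : Rˣ) : R) * p) (-((u⁻¹ : Rˣ) : R) * q) := by
    intro g u p q ⟨hc, hγg, hr⟩
    have hci := hsand_inv g u hc
    refine ⟨?_, ?_, ?_⟩
    · intro s
      rw [inv_inv]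
      exact hci s
    · have step : γ g⁻¹ = (γ g)⁻¹ := map_inv γ g
      rw [step, hγg]
      have step2 : (E (r₁ * p + r₂ * q) * g)⁻¹
          = (g⁻¹ * E (-(r₁ * p + r₂ * q)) * g) * g⁻¹ := by rw [hEneg]; group
      rw [step2, hci]
      congr 2
      ring
    · have h3 : ((u⁻¹ : Rˣ) : R) * (u : R) = 1 := Units.inv_mul u
      linear_combination (-((u⁻¹ : Rˣ) : R)) * hr + h3
  -- Good for the generators and 1
  have hGood_x₁ : IsGood E γ a₁ a₂ r₁ r₂ x₁ a₁ 1 0 := by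
    refine ⟨hconj₁, ?_, by ring⟩
    rw [hγ₁]
    congr 2
    ring
  have hGood_x₂ : IsGood E γ a₁ a₂ r₁ r₂ x₂ a₂ 0 1 := by
    refine ⟨hconj₂, ?_, by ring⟩
    rw [hγ₂]
    congr 2
    ring
  have hGood_one : IsGood E γ a₁ a₂ r₁ r₂ 1 1 0 0 := by
    refine ⟨?_, ?_, by push_cast; ring⟩
    · intro s
      rw [inv_one, mul_one, one_mul, Units.val_one, one_mul]
    · rw [map_one]
      have : r₁ * 0 + r₂ * 0 = 0 := by ring
      rw [this, hE0, one_mul]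
  have hmemtop : ∀ g : G, g ∈ Subgroup.closure ({x₁, x₂} : Set G) := by
    intro g; rw [hgen]; exact Subgroup.mem_top g
  -- First induction: every g is Good, with known commutators against x₁ and x₂
  have main1 : ∀ g : G, ∃ (u : Rˣ) (p q : R), IsGood E γ a₁ a₂ r₁ r₂ g u p q ∧
      ⁅g, x₁⁆ = E (-q) ∧ ⁅g, x₂⁆ = E p := by
    intro g
    induction hmemtop g using Subgroup.closure_induction with
    | mem x hx =>
      rcases hx with hx | hx
      · subst hx
        refine ⟨a₁, 1, 0, hGood_x₁, ?_, ?_⟩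
        · rw [commutatorElement_self, neg_zero, hE0]
        · exact hE_one.symm
      · rw [Set.mem_singleton_iff] at hx
        subst hx
        refine ⟨a₂, 0, 1, hGood_x₂, ?_, ?_⟩
        · rw [← commutatorElement_inv, ← hE_one, ← hEneg]
        · rw [commutatorElement_self, hE0]
    | one =>
      refine ⟨1, 0, 0, hGood_one, ?_, ?_⟩
      · simp only [commutatorElement_def]
        rw [neg_zero, hE0]; group
      · simp only [commutatorElement_def]
        rw [hE0]; group
    | mul g₁ g₂ _ _ ih₁ ih₂ =>
      obtain ⟨u₁, p₁, q₁, hg₁, hx11, hx12⟩ := ih₁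
      obtain ⟨u₂, p₂, q₂, hg₂, hx21, hx22⟩ := ih₂
      refine ⟨u₁ * u₂, p₁ + (u₁ : R) * p₂, q₁ + (u₁ : R) * q₂,
        hGood_mul g₁ g₂ u₁ u₂ p₁ q₁ p₂ q₂ hg₁ hg₂, ?_, ?_⟩
      · rw [aux_comm_mul_left, hx21, hx11, hg₁.1, ← hE_add]
        congr 1
        ring
      · rw [aux_comm_mul_left, hx22, hx12, hg₁.1, ← hE_add]
        congr 1
        ring
    | inv g _ ih =>
      obtain ⟨u, p, q, hg, hx1, hx2⟩ := ih
      refine ⟨u⁻¹, -((u⁻¹ : Rˣ) : R) * p, -((u⁻¹ : Rˣ) : R) * q,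
        hGood_inv g u p q hg, ?_, ?_⟩
      · have h1 : ⁅g, x₁⁆⁻¹ = E q := by rw [hx1, ← hEneg, neg_neg]
        rw [aux_comm_inv_left, h1, hsand_inv g u hg.1]
        congr 1
        ring
      · have h1 : ⁅g, x₂⁆⁻¹ = E (-p) := by rw [hx2, hEneg]
        rw [aux_comm_inv_left, h1, hsand_inv g u hg.1]
        congr 1
        ring
  -- Second induction: commutator of a fixed good g against arbitrary h
  have main2 : ∀ (g : G) (u : Rˣ) (p q : R), IsGood E γ a₁ a₂ r₁ r₂ g u p q →
      ⁅g, x₁⁆ = E (-q) → ⁅g, x₂⁆ = E p →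
      ∀ h : G, ∃ (v : Rˣ) (p' q' : R), IsGood E γ a₁ a₂ r₁ r₂ h v p' q' ∧
        ⁅g, h⁆ = E (p * q' - q * p') := by
    intro g u p q hg hgx1 hgx2 h
    induction hmemtop h using Subgroup.closure_induction with
    | mem x hx =>
      rcases hx with hx | hx
      · subst hx
        refine ⟨a₁, 1, 0, hGood_x₁, ?_⟩
        rw [hgx1]; congr 1; ring
      · rw [Set.mem_singleton_iff] at hx
        subst hx
        refine ⟨a₂, 0, 1, hGood_x₂, ?_⟩
        rw [hgx2]; congr 1; ring
    | one =>
      refine ⟨1, 0, 0, hGood_one, ?_⟩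
      simp only [commutatorElement_def]
      have : p * 0 - q * 0 = 0 := by ring
      rw [this, hE0]; group
    | mul h₁ h₂ _ _ ih₁ ih₂ =>
      obtain ⟨v₁, p₁', q₁', hh₁, hc₁⟩ := ih₁
      obtain ⟨v₂, p₂', q₂', hh₂, hc₂⟩ := ih₂
      refine ⟨v₁ * v₂, p₁' + (v₁ : R) * p₂', q₁' + (v₁ : R) * q₂',
        hGood_mul h₁ h₂ v₁ v₂ p₁' q₁' p₂' q₂' hh₁ hh₂, ?_⟩
      rw [aux_comm_mul_right, hc₁, hc₂, hh₁.1, ← hE_add]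
      congr 1
      ring
    | inv h _ ih =>
      obtain ⟨v, p', q', hh, hc⟩ := ih
      refine ⟨v⁻¹, -((v⁻¹ : Rˣ) : R) * p', -((v⁻¹ : Rˣ) : R) * q',
        hGood_inv h v p' q' hh, ?_⟩
      have h1 : ⁅g, h⁆⁻¹ = E (-(p * q' - q * p')) := by rw [hc, hEneg]
      rw [aux_comm_inv_right, h1, hsand_inv h v hh.1]
      congr 1
      ring
  -- Key: γ acts by d on every commutator
  have keyC : ∀ g h : G, ∃ c : R, ⁅g, h⁆ = E c ∧ γ ⁅g, h⁆ = E (d * c) := by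
    intro g h
    obtain ⟨u, p, q, hg, hgx1, hgx2⟩ := main1 g
    obtain ⟨v, p', q', hh, hc⟩ := main2 g u p q hg hgx1 hgx2 h
    set c : R := p * q' - q * p' with hcdef
    set t : R := r₁ * p + r₂ * q with ht
    set t' : R := r₁ * p' + r₂ * q' with ht'
    refine ⟨c, hc, ?_⟩
    have hmap : γ ⁅g, h⁆ = ⁅γ g, γ h⁆ := map_commutatorElement γ g h
    rw [hmap, hg.2.1, hh.2.1, ← ht, ← ht']
    -- compute ⁅E t * g, E t' * h⁆
    have f1 : ⁅g, E t'⁆ = E ((u : R) * t' - t') := by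
      rw [commutatorElement_def, hg.1, ← hEneg, ← hE_add]
      congr 1
      ring
    have f2 : ⁅g, E t' * h⁆ = E ((u : R) * t' - t' + c) := by
      rw [aux_comm_mul_right, f1, hc, ← hEneg, ← hE_add, ← hE_add, ← hE_add]
      congr 1
      ring
    have f3a : ⁅E t, E t'⁆ = 1 := by
      rw [commutatorElement_def, ← hEneg, ← hEneg, ← hE_add, ← hE_add, ← hE_add]
      have : t + t' + -t + -t' = 0 := by ring
      rw [this, hE0]
    have f3b : ⁅E t, h⁆ = E (t - (v : R) * t) := by
      rw [commutatorElement_def]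
      have step : E t * h * (E t)⁻¹ * h⁻¹ = E t * (h * (E t)⁻¹ * h⁻¹) := by group
      rw [step, ← hEneg, hh.1, ← hE_add]
      congr 1
      ring
    have f3 : ⁅E t, E t' * h⁆ = E (t - (v : R) * t) := by
      rw [aux_comm_mul_right, f3a, f3b, one_mul, ← hEneg, ← hE_add, ← hE_add]
      congr 1
      ring
    rw [aux_comm_mul_left, f2, f3, ← hEneg, ← hE_add, ← hE_add, ← hE_add]
    congr 1
    have hur := hg.2.2
    have hvr := hh.2.2
    rw [ht, ht', hcdef, hd]
    linear_combination (r₁ * p' + r₂ * q') * hur - (r₁ * p + r₂ * q) * hvr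
  -- The set of E-images on which γ acts by d is a subgroup containing all commutators
  let H : Subgroup G :=
    { carrier := {g : G | ∃ s : R, g = E s ∧ γ (E s) = E (d * s)}
      one_mem' := by
        refine ⟨0, by rw [hE0], ?_⟩
        rw [hE0, map_one, mul_zero, hE0]
      mul_mem' := by
        rintro g₁ g₂ ⟨s₁, rfl, h1⟩ ⟨s₂, rfl, h2⟩
        refine ⟨s₁ + s₂, (hE_add s₁ s₂).symm, ?_⟩
        rw [hE_add, map_mul, h1, h2, ← hE_add]
        congr 1
        ring
      inv_mem' := by
        rintro g ⟨s, rfl, h1⟩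
        refine ⟨-s, (hEneg s).symm, ?_⟩
        rw [hEneg, map_inv, h1, ← hEneg]
        congr 1
        ring }
  have hle : commutator G ≤ H := by
    rw [commutator_def, Subgroup.commutator_le]
    intro g _ h _
    obtain ⟨c, hc, hγc⟩ := keyC g h
    rw [hc] at hγc ⊢
    exact ⟨c, rfl, hγc⟩
  intro s
  have hmem : E s ∈ commutator G := by
    have h1 : E s ∈ Set.range E := ⟨s, rfl⟩
    rw [hE_range] at h1
    exact h1
  obtain ⟨s', hs', hγs'⟩ := hle hmem
  have : s = s' := hE_inj hs'
  rw [this]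
  exact hγs'
end
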